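/- Fix D > 0, 0 < p < 1, 0 < L < 1, μ ∈ ℝ and σ > 0. Consider the system in (ν, τ) ∈ ℝ × (0, ∞): p = Φ(x(D)) and D·p·(1 − L) = exp(μ + σ²/2)·Φ(x(D) − σ) + exp(ν + τ²/2)·Φ(x(D) − τ), where x(D) is the unique real solution of D = exp(μ + σ·x) + exp(ν + τ·x). A solution (ν, τ) ∈ ℝ × (0, ∞) exists if and only if both (i) p < Φ((log D − μ)/σ), and (ii) (p·exp(μ + σ·Φ⁻¹(p)) − exp(μ + σ²/2)·Φ(Φ⁻¹(p) − σ))/(p·D) < L < 1 − exp(μ + σ²/2)·Φ(Φ⁻¹(p) − σ)/(p·D). Moreover, if a solution exists it is unique. -/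

import Mathlib

open Real MeasureTheory Set Filter

/-- The standard normal density `φ(u) = (2π)^{-1/2} exp(-u²/2)`. -/
noncomputable def stdNormalPDF (u : ℝ) : ℝ := (Real.sqrt (2 * Real.pi))⁻¹ * Real.exp (-u ^ 2 / 2)

/-- The standard normal cumulative distribution function `Φ`. -/
noncomputable def stdNormalCDF (x : ℝ) : ℝ := ∫ u in Set.Iic x, stdNormalPDF u

/-- The standard normal quantile function `Φ⁻¹`. -/
noncomputable def stdNormalQuantile (p : ℝ) : ℝ := Function.invFun stdNormalCDF p

lemma pdf_pos (u : ℝ) : 0 < stdNormalPDF u := by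
  unfold stdNormalPDF
  positivity

lemma pdf_cont : Continuous stdNormalPDF := by
  unfold stdNormalPDF
  fun_prop

lemma pdf_eq (u : ℝ) : stdNormalPDF u = (Real.sqrt (2 * Real.pi))⁻¹ * Real.exp (-(1/2) * u ^ 2) := by
  unfold stdNormalPDF; ring_nf

lemma pdf_integrable : Integrable stdNormalPDF := by
  simp only [funext pdf_eq]
  exact (integrable_exp_neg_mul_sq (by norm_num)).const_mul _

lemma integral_pdf : ∫ u, stdNormalPDF u = 1 := by
  simp only [funext pdf_eq]
  rw [MeasureTheory.integral_const_mul, integral_gaussian]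
  rw [inv_mul_eq_one₀ (by positivity)]
  rw [show Real.pi / (1/2) = 2 * Real.pi by ring]

lemma cdf_sub {a b : ℝ} (h : a ≤ b) :
    stdNormalCDF b - stdNormalCDF a = ∫ u in Set.Ioc a b, stdNormalPDF u := by
  unfold stdNormalCDF
  rw [← Set.Iic_union_Ioc_eq_Iic h, MeasureTheory.setIntegral_union
    (Set.Iic_disjoint_Ioc le_rfl) measurableSet_Ioc
    pdf_integrable.integrableOn pdf_integrable.integrableOn]
  ring

lemma pdf_support : Function.support stdNormalPDF = Set.univ := by
  ext u; simp [Function.support, (pdf_pos u).ne']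

lemma cdf_strictMono : StrictMono stdNormalCDF := by
  intro a b hab
  have h := cdf_sub hab.le
  have hpos : 0 < ∫ u in Set.Ioc a b, stdNormalPDF u := by
    rw [MeasureTheory.setIntegral_pos_iff_support_of_nonneg_ae
      (Filter.Eventually.of_forall fun u => (pdf_pos u).le) pdf_integrable.integrableOn]
    rw [pdf_support, Set.univ_inter]
    simpa using hab
  linarith

lemma cdf_lipschitz : LipschitzWith ⟨(Real.sqrt (2 * Real.pi))⁻¹, by positivity⟩ stdNormalCDF := by
  have hb : ∀ u, stdNormalPDF u ≤ (Real.sqrt (2 * Real.pi))⁻¹ := by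
    intro u
    unfold stdNormalPDF
    nth_rewrite 2 [← mul_one ((Real.sqrt (2 * Real.pi))⁻¹)]
    apply mul_le_mul_of_nonneg_left _ (by positivity)
    exact Real.exp_le_one_iff.mpr (by nlinarith [sq_nonneg u])
  apply LipschitzWith.of_dist_le_mul
  intro a b
  wlog hab : b ≤ a generalizing a b
  · rw [dist_comm (stdNormalCDF a), dist_comm a b]
    exact this b a (le_of_not_ge hab)
  rw [Real.dist_eq, Real.dist_eq, abs_of_nonneg (sub_nonneg.mpr (cdf_strictMono.monotone hab)),
    cdf_sub hab]
  calc ∫ u in Set.Ioc b a, stdNormalPDF u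
      ≤ ∫ _u in Set.Ioc b a, (Real.sqrt (2 * Real.pi))⁻¹ := by
        apply MeasureTheory.setIntegral_mono_on pdf_integrable.integrableOn
          (integrableOn_const (by rw [Real.volume_Ioc]; exact ENNReal.ofReal_ne_top))
          measurableSet_Ioc
        intro u _; exact hb u
    _ ≤ (Real.sqrt (2 * Real.pi))⁻¹ * |a - b| := by
        rw [MeasureTheory.setIntegral_const, Real.volume_real_Ioc, smul_eq_mul,
          max_eq_left (by linarith), abs_of_nonneg (by linarith)]
        ring_nf
        exact le_rfl

lemma cdf_continuous : Continuous stdNormalCDF := cdf_lipschitz.continuous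

lemma cdf_tendsto_atTop : Filter.Tendsto stdNormalCDF Filter.atTop (nhds 1) := by
  rw [← integral_pdf]
  exact (MeasureTheory.aecover_Iic (tendsto_id : Filter.Tendsto (id : ℝ → ℝ)
    Filter.atTop Filter.atTop)).integral_tendsto_of_countably_generated pdf_integrable

lemma cdf_add_tail (x : ℝ) : stdNormalCDF x + ∫ u in Set.Ioi x, stdNormalPDF u = 1 := by
  rw [← integral_pdf]
  unfold stdNormalCDF
  rw [← MeasureTheory.setIntegral_union (Set.Iic_disjoint_Ioi le_rfl) measurableSet_Ioi
    pdf_integrable.integrableOn pdf_integrable.integrableOn, Set.Iic_union_Ioi,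
    MeasureTheory.setIntegral_univ]

lemma cdf_tendsto_atBot : Filter.Tendsto stdNormalCDF Filter.atBot (nhds 0) := by
  have h : Filter.Tendsto (fun x : ℝ => ∫ u in Set.Ioi x, stdNormalPDF u)
      Filter.atBot (nhds 1) := by
    rw [← integral_pdf]
    exact (MeasureTheory.aecover_Ioi (tendsto_id : Filter.Tendsto (id : ℝ → ℝ)
      Filter.atBot Filter.atBot)).integral_tendsto_of_countably_generated pdf_integrable
  have : stdNormalCDF = fun x => 1 - ∫ u in Set.Ioi x, stdNormalPDF u := by
    ext x; linarith [cdf_add_tail x]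
  rw [this]
  simpa using (tendsto_const_nhds (x := (1:ℝ))).sub h

lemma cdf_pos (x : ℝ) : 0 < stdNormalCDF x := by
  have := cdf_strictMono (show x - 1 < x by linarith)
  have h0 : 0 ≤ stdNormalCDF (x-1) :=
    MeasureTheory.setIntegral_nonneg measurableSet_Iic fun u _ => (pdf_pos u).le
  linarith

lemma cdf_lt_one (x : ℝ) : stdNormalCDF x < 1 := by
  have h := cdf_add_tail x
  have hpos : 0 < ∫ u in Set.Ioi x, stdNormalPDF u := by
    rw [MeasureTheory.setIntegral_pos_iff_support_of_nonneg_ae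
      (Filter.Eventually.of_forall fun u => (pdf_pos u).le) pdf_integrable.integrableOn]
    rw [pdf_support, Set.univ_inter]
    simp
  linarith

lemma cdf_surj {p : ℝ} (hp0 : 0 < p) (hp1 : p < 1) : ∃ x, stdNormalCDF x = p := by
  obtain ⟨a, ha⟩ := (cdf_tendsto_atBot.eventually (eventually_lt_nhds hp0)).exists
  obtain ⟨b, hb⟩ := (cdf_tendsto_atTop.eventually (eventually_gt_nhds hp1)).exists
  have hab : a ≤ b := by
    by_contra h
    exact absurd (cdf_strictMono (lt_of_not_ge h)) (by linarith)
  obtain ⟨x, _, hx⟩ := intermediate_value_Icc hab cdf_continuous.continuousOn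
    ⟨ha.le, hb.le⟩
  exact ⟨x, hx⟩

noncomputable def millsG (t : ℝ) : ℝ := Real.exp (t ^ 2 / 2) * stdNormalCDF (-t)

lemma integrable_aux (t : ℝ) : Integrable (fun s : ℝ => Real.exp (-t * s - s ^ 2 / 2)) := by
  have h : (fun s : ℝ => Real.exp (-t * s - s ^ 2 / 2)) =
      fun s => Real.exp (t ^ 2 / 2) * Real.exp (-(1/2) * (s + t) ^ 2) := by
    ext s; rw [← Real.exp_add]; ring_nf
  rw [h]
  exact ((integrable_exp_neg_mul_sq (by norm_num)).comp_add_right t).const_mul _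

lemma pdf_even (u : ℝ) : stdNormalPDF (-u) = stdNormalPDF u := by
  unfold stdNormalPDF; rw [neg_pow]; ring_nf

lemma millsG_repr (t : ℝ) : millsG t
    = (Real.sqrt (2 * Real.pi))⁻¹ * ∫ s in Set.Ioi (0:ℝ), Real.exp (-t * s - s ^ 2 / 2) := by
  have h1 : stdNormalCDF (-t) = ∫ x in Set.Ioi t, stdNormalPDF x := by
    unfold stdNormalCDF
    rw [show (∫ u in Set.Iic (-t), stdNormalPDF u) = ∫ u in Set.Iic (-t), stdNormalPDF (-u) from
      (MeasureTheory.setIntegral_congr_fun measurableSet_Iic fun u _ => (pdf_even u).symm)]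
    rw [integral_comp_neg_Iic (-t) stdNormalPDF, neg_neg]
  have A : MeasurableEmbedding (fun s : ℝ => s + t) :=
    (Homeomorph.addRight t).isClosedEmbedding.measurableEmbedding
  have h2 := MeasurableEmbedding.setIntegral_map (μ := volume) A stdNormalPDF (Set.Ioi t)
  rw [MeasureTheory.map_add_right_eq_self volume t] at h2
  have hpre : (fun s : ℝ => s + t) ⁻¹' Set.Ioi t = Set.Ioi 0 := by
    ext s; simp
  rw [hpre] at h2
  rw [millsG, h1, h2, ← MeasureTheory.integral_const_mul, ← MeasureTheory.integral_const_mul]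
  apply MeasureTheory.setIntegral_congr_fun measurableSet_Ioi
  intro s _
  dsimp only
  unfold stdNormalPDF
  rw [show Real.exp (t^2/2) * ((Real.sqrt (2*Real.pi))⁻¹ * Real.exp (-(s+t)^2/2))
      = (Real.sqrt (2*Real.pi))⁻¹ * (Real.exp (t^2/2) * Real.exp (-(s+t)^2/2)) by ring,
    ← Real.exp_add]
  congr 2
  ring

lemma millsG_pos (t : ℝ) : 0 < millsG t := mul_pos (Real.exp_pos _) (cdf_pos _)

lemma millsG_continuous : Continuous millsG :=
  ((Real.continuous_exp.comp (by fun_prop))).mul (cdf_continuous.comp continuous_neg)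

lemma millsG_strictAnti : StrictAnti millsG := by
  intro t1 t2 h
  have key : 0 < ∫ s in Set.Ioi (0:ℝ),
      (Real.exp (-t1 * s - s ^ 2 / 2) - Real.exp (-t2 * s - s ^ 2 / 2)) := by
    rw [MeasureTheory.setIntegral_pos_iff_support_of_nonneg_ae]
    · refine lt_of_lt_of_le ?_ (measure_mono (show Set.Ioi (0:ℝ) ⊆ _ ∩ Set.Ioi 0 from ?_))
      · rw [Real.volume_Ioi]; exact ENNReal.zero_lt_top
      · intro s hs
        refine ⟨?_, hs⟩
        simp only [Function.mem_support, sub_ne_zero]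
        intro hc
        have := Real.exp_lt_exp.mpr (show -t2 * s - s^2/2 < -t1 * s - s^2/2 by
          have : 0 < s := hs; nlinarith)
        exact absurd hc (by linarith)
    · filter_upwards [MeasureTheory.ae_restrict_mem measurableSet_Ioi] with s hs
      have : 0 < s := hs
      simp only [Pi.zero_apply, sub_nonneg]
      exact Real.exp_le_exp.mpr (by nlinarith)
    · exact ((integrable_aux t1).sub (integrable_aux t2)).integrableOn
  rw [MeasureTheory.integral_sub (integrable_aux t1).integrableOn
    (integrable_aux t2).integrableOn] at key
  rw [millsG_repr t1, millsG_repr t2]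
  have hC : 0 < (Real.sqrt (2 * Real.pi))⁻¹ := by positivity
  nlinarith

lemma millsG_tendsto_zero : Filter.Tendsto millsG Filter.atTop (nhds 0) := by
  have key : Filter.Tendsto (fun t : ℝ => ∫ s in Set.Ioi (0:ℝ), Real.exp (-t * s - s ^ 2 / 2))
      Filter.atTop (nhds 0) := by
    suffices main : Filter.Tendsto (fun t : ℝ => ∫ s in Set.Ioi (0:ℝ),
        Real.exp (-t * s - s ^ 2 / 2)) Filter.atTop (nhds (∫ _s in Set.Ioi (0:ℝ), (0:ℝ))) by
      simpa using main
    apply MeasureTheory.tendsto_integral_filter_of_dominated_convergence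
      (fun s => Real.exp (-s ^ 2 / 2))
    · exact Filter.Eventually.of_forall fun t => (Continuous.aestronglyMeasurable (by fun_prop))
    · filter_upwards [Filter.eventually_ge_atTop (0:ℝ)] with t ht
      filter_upwards [MeasureTheory.ae_restrict_mem measurableSet_Ioi] with s hs
      have hs' : 0 < s := hs
      rw [Real.norm_eq_abs, abs_of_pos (Real.exp_pos _)]
      exact Real.exp_le_exp.mpr (by nlinarith)
    · have : (fun s : ℝ => Real.exp (-s ^ 2 / 2)) = fun s => Real.exp (-(1/2) * s ^ 2) := by
        ext s; ring_nf
      rw [this]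
      exact (integrable_exp_neg_mul_sq (by norm_num)).integrableOn
    · filter_upwards [MeasureTheory.ae_restrict_mem measurableSet_Ioi] with s hs
      have hs' : 0 < s := hs
      have heq : (fun t : ℝ => Real.exp (-t * s - s ^ 2 / 2))
          = fun t => Real.exp (-s^2/2) * Real.exp (s * -t) := by
        ext u; rw [← Real.exp_add]; ring_nf
      rw [heq, show (0:ℝ) = Real.exp (-s^2/2) * 0 by ring]
      apply Filter.Tendsto.const_mul
      exact Real.tendsto_exp_atBot.comp
        ((tendsto_neg_atBot_iff.mpr tendsto_id).const_mul_atBot hs')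
  simp only [funext millsG_repr]
  have := key.const_mul ((Real.sqrt (2 * Real.pi))⁻¹)
  simpa using this

/-- `(ν, τ)` together with the induced `x(D)` solves the comonotonic two-assets
calibration system for issuer debt `D`, PD `p` and LGD `L`, given cover pool
parameters `μ` and `σ`. -/
def SolvesCalibration (D p L μ σ ν τ x : ℝ) : Prop :=
  0 < τ ∧
  D = Real.exp (μ + σ * x) + Real.exp (ν + τ * x) ∧
  p = stdNormalCDF x ∧
  D * p * (1 - L) = Real.exp (μ + σ ^ 2 / 2) * stdNormalCDF (x - σ)
    + Real.exp (ν + τ ^ 2 / 2) * stdNormalCDF (x - τ)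

lemma quantile_cdf (x : ℝ) : stdNormalQuantile (stdNormalCDF x) = x :=
  Function.leftInverse_invFun cdf_strictMono.injective x

lemma cdf_quantile {p : ℝ} (hp0 : 0 < p) (hp1 : p < 1) :
    stdNormalCDF (stdNormalQuantile p) = p := by
  obtain ⟨x, hx⟩ := cdf_surj hp0 hp1
  rw [← hx, quantile_cdf]

/-- The auxiliary function value: `exp(τ²/2 - τx) Φ(x - τ) = exp(-x²/2) G(τ - x)`. -/
lemma f_eq (x τ : ℝ) : Real.exp (τ ^ 2 / 2 - τ * x) * stdNormalCDF (x - τ)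
    = Real.exp (-x ^ 2 / 2) * millsG (τ - x) := by
  unfold millsG
  rw [show -(τ - x) = x - τ by ring, ← mul_assoc, ← Real.exp_add]
  congr 2
  ring

lemma f_zero (x : ℝ) : Real.exp (-x ^ 2 / 2) * millsG (0 - x) = stdNormalCDF x := by
  unfold millsG
  rw [show -(0 - x) = x by ring, ← mul_assoc, ← Real.exp_add,
    show -x ^ 2 / 2 + (0 - x) ^ 2 / 2 = 0 by ring, Real.exp_zero, one_mul]

/-- Rewriting of the second fund term. -/
lemma term_eq (ν τ x : ℝ) : Real.exp (ν + τ ^ 2 / 2) * stdNormalCDF (x - τ)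
    = Real.exp (ν + τ * x) * (Real.exp (-x ^ 2 / 2) * millsG (τ - x)) := by
  rw [← f_eq, ← mul_assoc, ← Real.exp_add]
  congr 2
  ring

/-- Existence and uniqueness of a solution `(ν, τ) ∈ ℝ × (0, ∞)` of the comonotonic
two-assets calibration system: a solution exists iff `p < Φ((log D - μ)/σ)` and the
LGD `L` lies strictly between the stated bounds; if a solution exists, it is unique. -/
theorem calibration_solution_iff (D p L μ σ : ℝ) (hD : 0 < D) (hp0 : 0 < p) (hp1 : p < 1)
    (hL0 : 0 < L) (hL1 : L < 1) (hσ : 0 < σ) :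
    ((∃ ν τ x : ℝ, SolvesCalibration D p L μ σ ν τ x) ↔
      (p < stdNormalCDF ((Real.log D - μ) / σ) ∧
        (p * Real.exp (μ + σ * stdNormalQuantile p)
            - Real.exp (μ + σ ^ 2 / 2) * stdNormalCDF (stdNormalQuantile p - σ)) / (p * D) < L ∧
        L < 1 - Real.exp (μ + σ ^ 2 / 2) * stdNormalCDF (stdNormalQuantile p - σ) / (p * D))) ∧
    (∀ ν τ x ν' τ' x' : ℝ, SolvesCalibration D p L μ σ ν τ x →
        SolvesCalibration D p L μ σ ν' τ' x' → ν = ν' ∧ τ = τ') := by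

  have hpD : 0 < p * D := mul_pos hp0 hD
  constructor
  · constructor
    · rintro ⟨ν, τ, x, hτ, hDsum, hpΦ, hthird⟩
      have hx : stdNormalCDF x = p := hpΦ.symm
      have hq : stdNormalQuantile p = x := by rw [← hx, quantile_cdf]
      have hRpos : 0 < D - Real.exp (μ + σ * x) := by
        linarith [Real.exp_pos (ν + τ * x), hDsum]
      have hRexp : Real.exp (ν + τ * x) = D - Real.exp (μ + σ * x) := by linarith [hDsum]
      have hxlt : x < (Real.log D - μ) / σ := by
        have h1' : μ + σ * x < Real.log D := by
          rw [← Real.exp_lt_exp, Real.exp_log hD]; linarith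
        rw [lt_div_iff₀ hσ]; nlinarith
      have hth : D * p * (1 - L) = Real.exp (μ + σ ^ 2 / 2) * stdNormalCDF (x - σ)
          + (D - Real.exp (μ + σ * x)) * (Real.exp (-x ^ 2 / 2) * millsG (τ - x)) := by
        rw [hthird, term_eq ν τ x, hRexp]
      have hf_pos : 0 < Real.exp (-x ^ 2 / 2) * millsG (τ - x) :=
        mul_pos (Real.exp_pos _) (millsG_pos _)
      have hf_lt : Real.exp (-x ^ 2 / 2) * millsG (τ - x) < p := by
        have hlt := millsG_strictAnti (show (0:ℝ) - x < τ - x by linarith)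
        have h0 := f_zero x
        rw [hx] at h0
        nlinarith [Real.exp_pos (-x ^ 2 / 2)]
      refine ⟨hx ▸ cdf_strictMono hxlt, ?_, ?_⟩
      · rw [hq, div_lt_iff₀ hpD]
        nlinarith [mul_lt_mul_of_pos_left hf_lt hRpos, hth]
      · rw [hq]
        have key : Real.exp (μ + σ ^ 2 / 2) * stdNormalCDF (x - σ) / (p * D) < 1 - L := by
          rw [div_lt_iff₀ hpD]
          nlinarith [mul_pos hRpos hf_pos, hth]
        linarith
    · rintro ⟨h1, h2, h3⟩
      set x0 := stdNormalQuantile p with hx0def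
      have hx0 : stdNormalCDF x0 = p := cdf_quantile hp0 hp1
      set A := Real.exp (μ + σ ^ 2 / 2) * stdNormalCDF (x0 - σ) with hA
      set E := Real.exp (μ + σ * x0) with hE
      have hxlt : x0 < (Real.log D - μ) / σ :=
        cdf_strictMono.lt_iff_lt.mp (hx0.symm ▸ h1)
      have hRpos : 0 < D - E := by
        have h1' : μ + σ * x0 < Real.log D := by
          rw [lt_div_iff₀ hσ] at hxlt; nlinarith
        have h2' := Real.exp_lt_exp.mpr h1'
        rw [Real.exp_log hD] at h2'
        rw [hE]; linarith
      set c := D * p * (1 - L) - A with hc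
      have hc_pos : 0 < c := by
        have h3' : A / (p * D) < 1 - L := by linarith
        rw [div_lt_iff₀ hpD] at h3'
        rw [hc]; nlinarith
      have hc_lt : c < p * (D - E) := by
        rw [div_lt_iff₀ hpD] at h2
        rw [hc]; nlinarith
      set f := fun τ : ℝ => Real.exp (-x0 ^ 2 / 2) * millsG (τ - x0) with hf
      have hf0 : f 0 = p := by
        show Real.exp (-x0 ^ 2 / 2) * millsG (0 - x0) = p
        rw [f_zero]; exact hx0
      have hf_cont : Continuous f := by
        apply Continuous.mul continuous_const
        exact millsG_continuous.comp (continuous_id.sub continuous_const)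
      have hf_tendsto : Filter.Tendsto f Filter.atTop (nhds 0) := by
        rw [show (0:ℝ) = Real.exp (-x0 ^ 2 / 2) * 0 by ring]
        exact (millsG_tendsto_zero.comp (tendsto_atTop_add_const_right _ _ tendsto_id)).const_mul _
      have hcR_pos : 0 < c / (D - E) := div_pos hc_pos hRpos
      have hcR_lt : c / (D - E) < p := by rw [div_lt_iff₀ hRpos]; nlinarith
      obtain ⟨T, hT1, hT2⟩ :=
        ((hf_tendsto.eventually (eventually_lt_nhds hcR_pos)).and
          (Filter.eventually_ge_atTop (0:ℝ))).exists
      obtain ⟨τ, hτmem, hτeq⟩ := intermediate_value_Icc' hT2 hf_cont.continuousOn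
        (show c / (D - E) ∈ Set.Icc (f T) (f 0) from ⟨hT1.le, by rw [hf0]; exact hcR_lt.le⟩)
      have hτpos : 0 < τ := by
        rcases eq_or_lt_of_le hτmem.1 with h | h
        · exfalso; rw [← h, hf0] at hτeq; exact absurd hτeq.symm (ne_of_lt hcR_lt)
        · exact h
      have hτeq' : Real.exp (-x0 ^ 2 / 2) * millsG (τ - x0) = c / (D - E) := hτeq
      refine ⟨Real.log (D - E) - τ * x0, τ, x0, hτpos, ?_, hx0.symm, ?_⟩
      · rw [show Real.log (D - E) - τ * x0 + τ * x0 = Real.log (D - E) by ring,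
          Real.exp_log hRpos, ← hE]
        ring
      · rw [term_eq (Real.log (D - E) - τ * x0) τ x0,
          show Real.log (D - E) - τ * x0 + τ * x0 = Real.log (D - E) by ring,
          Real.exp_log hRpos, hτeq', mul_div_cancel₀ _ (ne_of_gt hRpos), ← hA, hc]
        ring
  · rintro ν τ x ν' τ' x' ⟨hτ, hD1, hp1', hth1⟩ ⟨hτ', hD2, hp2', hth2⟩
    have hx : x = x' := cdf_strictMono.injective (hp1'.symm.trans hp2')
    subst hx
    have hR : Real.exp (ν + τ * x) = Real.exp (ν' + τ' * x) := by
      have h12 : Real.exp (μ + σ * x) + Real.exp (ν + τ * x)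
          = Real.exp (μ + σ * x) + Real.exp (ν' + τ' * x) := by rw [← hD1, ← hD2]
      linarith
    have hfeq : millsG (τ - x) = millsG (τ' - x) := by
      have h := hth1.symm.trans hth2
      rw [term_eq ν τ x, term_eq ν' τ' x, hR] at h
      have hadd := add_left_cancel h
      have hcl := mul_left_cancel₀ (ne_of_gt (Real.exp_pos (ν' + τ' * x))) hadd
      exact mul_left_cancel₀ (ne_of_gt (Real.exp_pos (-x ^ 2 / 2))) hcl
    have hττ : τ = τ' := by
      have h := millsG_strictAnti.injective hfeq
      linarith [sub_left_inj.mp h]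
    subst hττ
    have hν : ν = ν' := by
      have h := Real.exp_injective hR
      linarith
    exact ⟨hν, rfl⟩
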